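/- Let x ∈ ℝ^n with x_i ≠ 1 for all i and t(x) = Σ_i 1/(1-x_i) = 1. Then for any y ∈ ℝ^{n+1} with y_i = x_i for i ≤ n and y_{n+1} ≠ 1, the matrix J - I + diag(y) (of order n+1) is nonsingular. -/

import Mathlib

open Matrix Finset

theorem stmt_3 (n : ℕ) (x : Fin n → ℝ) (h : ∀ i, x i ≠ 1)
    (ht : (∑ i, 1 / (1 - x i)) = 1)
    (y : Fin (n + 1) → ℝ) (hy : ∀ i : Fin n, y i.castSucc = x i)
    (hlast : y (Fin.last n) ≠ 1) :
    ((Matrix.of fun _ _ : Fin (n + 1) => (1 : ℝ)) - 1 + Matrix.diagonal y).det ≠ 0 := by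
  set d : Fin (n + 1) → ℝ := fun i => y i - 1 with hd
  have hy1 : ∀ i : Fin (n + 1), y i ≠ 1 := by
    intro i
    induction i using Fin.lastCases with
    | last => exact hlast
    | cast j => rw [hy j]; exact h j
  have hdne : ∀ i, d i ≠ 0 := fun i => sub_ne_zero_of_ne (hy1 i)
  have hM : (Matrix.of fun _ _ : Fin (n + 1) => (1 : ℝ)) - 1 + Matrix.diagonal y
      = Matrix.diagonal d + replicateCol Unit (fun _ : Fin (n+1) => (1:ℝ)) * replicateRow Unit (fun _ : Fin (n+1) => (1:ℝ)) := by
    ext i j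
    simp only [Matrix.add_apply, Matrix.sub_apply, Matrix.of_apply, Matrix.diagonal_apply,
      Matrix.mul_apply, Matrix.replicateCol_apply, Matrix.replicateRow_apply, Matrix.one_apply,
      Finset.sum_const, Finset.card_univ, Fintype.card_unit, one_smul]
    by_cases hij : i = j <;> simp [hij, hd]
  rw [hM]
  have hAdet : IsUnit (Matrix.diagonal d).det := by
    rw [Matrix.det_diagonal]
    exact (Finset.prod_ne_zero_iff.2 fun i _ => hdne i).isUnit
  rw [Matrix.det_add_replicateCol_mul_replicateRow hAdet]
  refine mul_ne_zero hAdet.ne_zero ?_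
  rw [Matrix.det_unique]
  have hinv : (Matrix.diagonal d)⁻¹ = Matrix.diagonal fun i => (d i)⁻¹ := by
    refine Matrix.inv_eq_right_inv ?_
    rw [Matrix.diagonal_mul_diagonal]
    convert Matrix.diagonal_one using 2
    ext i
    exact mul_inv_cancel₀ (hdne i)
  rw [hinv]
  have key : (1 + replicateRow Unit (fun _ : Fin (n+1) => (1:ℝ)) * (Matrix.diagonal fun i => (d i)⁻¹) *
      replicateCol Unit (fun _ : Fin (n+1) => (1:ℝ)) : Matrix Unit Unit ℝ) (default : Unit) (default : Unit) = 1 + ∑ i, (d i)⁻¹ := by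
    simp [Matrix.add_apply, Matrix.mul_apply, Matrix.diagonal_apply, Matrix.one_apply,
      Finset.sum_comm]
  rw [key]
  have hsum : ∑ i : Fin n, (x i - 1)⁻¹ = -1 := by
    have : ∑ i : Fin n, (x i - 1)⁻¹ = -∑ i, 1 / (1 - x i) := by
      rw [← Finset.sum_neg_distrib]
      refine Finset.sum_congr rfl fun i _ => ?_
      rw [one_div, ← inv_neg, neg_sub]
    rw [this, ht]
  rw [Fin.sum_univ_castSucc]
  simp only [hd]
  have : ∑ i : Fin n, (y i.castSucc - 1)⁻¹ = -1 := by
    rw [← hsum]; exact Finset.sum_congr rfl fun i _ => by rw [hy i]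
  rw [this]
  have : (1:ℝ) + (-1 + (y (Fin.last n) - 1)⁻¹) = (y (Fin.last n) - 1)⁻¹ := by ring
  rw [this]
  exact inv_ne_zero (hdne (Fin.last n))
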